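/- Let m, p be positive integers, A_c an m×m complex matrix, A_s a p×p complex matrix, and G : ℂ^m → ℂ^p continuously differentiable. Fix τ ≥ 0 and define Ψ_τ : ℂ^m → ℂ^p by Ψ_τ(X) = ∫_{−τ}^{0} e^{−s A_s} G(e^{s A_c} X) ds. Then Ψ_τ is differentiable, and for all X ∈ ℂ^m: D Ψ_τ(X)[A_c X] = G(X) − e^{τ A_s} G(e^{−τ A_c} X) + A_s Ψ_τ(X). -/

import Mathlib

open MeasureTheory intervalIntegral

/-- Matrix exponential over `ℂ`. -/
noncomputable def mexp {n : ℕ} (A : Matrix (Fin n) (Fin n) ℂ) : Matrix (Fin n) (Fin n) ℂ :=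
  NormedSpace.exp A

section BFAux

attribute [local instance] Matrix.linftyOpNormedAddCommGroup Matrix.linftyOpNormedRing
  Matrix.linftyOpNormedAlgebra

/-- `B.mulVec` as a continuous `ℝ`-linear map. -/
noncomputable def mvCLM {a b : ℕ} (B : Matrix (Fin a) (Fin b) ℂ) :
    (Fin b → ℂ) →L[ℝ] (Fin a → ℂ) :=
  LinearMap.toContinuousLinearMap ((Matrix.mulVecLin B).restrictScalars ℝ)

@[simp] lemma mvCLM_apply {a b : ℕ} (B : Matrix (Fin a) (Fin b) ℂ) (v : Fin b → ℂ) :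
    mvCLM B v = B.mulVec v := rfl

/-- `mulVec` as a continuous linear map in the matrix argument. -/
noncomputable def mvCLM₂ (a b : ℕ) :
    Matrix (Fin a) (Fin b) ℂ →L[ℝ] ((Fin b → ℂ) →L[ℝ] (Fin a → ℂ)) :=
  LinearMap.toContinuousLinearMap
    { toFun := mvCLM
      map_add' := by intro B C; ext v i; simp [Matrix.add_mulVec]
      map_smul' := by intro r B; ext v i; simp [Matrix.smul_mulVec] }

@[simp] lemma mvCLM₂_apply {a b : ℕ} (B : Matrix (Fin a) (Fin b) ℂ) :
    mvCLM₂ a b B = mvCLM B := rfl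

lemma hasDerivAt_mexp {n : ℕ} (A : Matrix (Fin n) (Fin n) ℂ) (t : ℝ) :
    HasDerivAt (fun s : ℝ => mexp (s • A)) (A * mexp (t • A)) t := by
  have h : ∀ B : Matrix (Fin n) (Fin n) ℂ, mexp B = NormedSpace.exp B := by
    intro B; rfl
  simp only [h]
  exact hasDerivAt_exp_smul_const' A t

lemma continuous_mexp {n : ℕ} (A : Matrix (Fin n) (Fin n) ℂ) :
    Continuous (fun s : ℝ => mexp (s • A)) :=
  continuous_iff_continuousAt.2 fun s => (hasDerivAt_mexp A s).continuousAt

lemma continuous_mvCLM_mexp {n : ℕ} (A : Matrix (Fin n) (Fin n) ℂ) :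
    Continuous (fun s : ℝ => mvCLM (mexp (s • A))) :=
  (mvCLM₂ n n).continuous.comp (continuous_mexp A)

lemma hasDerivAt_mexp_mulVec {n : ℕ} (A : Matrix (Fin n) (Fin n) ℂ) (v : Fin n → ℂ) (t : ℝ) :
    HasDerivAt (fun s : ℝ => (mexp (s • A)).mulVec v) ((A * mexp (t • A)).mulVec v) t := by
  have h := (mvCLM₂ n n).hasFDerivAt.comp_hasDerivAt t (hasDerivAt_mexp A t)
  have h2 := h.clm_apply (hasDerivAt_const t v)
  exact h2.congr_deriv (by rw [map_zero, add_zero]; rfl)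

lemma hasDerivAt_mvCLM_mexp_neg {n : ℕ} (A : Matrix (Fin n) (Fin n) ℂ) (t : ℝ) :
    HasDerivAt (fun s : ℝ => mvCLM (mexp ((-s) • A)))
      (-(mvCLM (A * mexp ((-t) • A)))) t := by
  have h1 : HasDerivAt (fun s : ℝ => mexp ((-s) • A)) ((-1 : ℝ) • (A * mexp ((-t) • A))) t :=
    (hasDerivAt_mexp A (-t)).scomp t (hasDerivAt_neg t)
  have h2 := (mvCLM₂ n n).hasFDerivAt.comp_hasDerivAt t h1
  have h3 : mvCLM₂ n n ((-1 : ℝ) • (A * mexp ((-t) • A))) = -(mvCLM (A * mexp ((-t) • A))) := by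
    rw [_root_.map_smul]
    ext v
    simp
  exact h2.congr_deriv h3

lemma mexp_mul_self_comm {n : ℕ} (A : Matrix (Fin n) (Fin n) ℂ) (s : ℝ) :
    mexp (s • A) * A = A * mexp (s • A) :=
  (((Commute.refl A).smul_right s).exp_right).symm.eq

end BFAux

lemma mexp_zero {n : ℕ} : mexp (0 : Matrix (Fin n) (Fin n) ℂ) = 1 := NormedSpace.exp_zero

set_option maxHeartbeats 1600000 in
/-- The autonomous (spatial) part of the homological equation satisfied by
the finite-`τ` Lyapunov–Perron-type integral
`Ψ_τ(X) = ∫_{−τ}^0 e^{−sA_s} G(e^{sA_c}X) ds`: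
`D Ψ_τ(X)[A_c X] = G(X) − e^{τA_s} G(e^{−τA_c}X) + A_s Ψ_τ(X)`. -/
theorem bf_parameterization_autonomous_homological_equation
    (m p : ℕ) (hm : 0 < m) (hp : 0 < p)
    (A_c : Matrix (Fin m) (Fin m) ℂ) (A_s : Matrix (Fin p) (Fin p) ℂ)
    (G : (Fin m → ℂ) → (Fin p → ℂ)) (hG : ContDiff ℝ 1 G)
    (τ : ℝ) (hτ : 0 ≤ τ)
    (Ψ : (Fin m → ℂ) → (Fin p → ℂ))
    (hΨ : ∀ X, Ψ X =
      ∫ s in (-τ)..0, (mexp ((-s) • A_s)).mulVec (G ((mexp (s • A_c)).mulVec X))) :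
    ∀ X : Fin m → ℂ,
      DifferentiableAt ℝ Ψ X ∧
      fderiv ℝ Ψ X (A_c.mulVec X)
        = G X - (mexp (τ • A_s)).mulVec (G ((mexp ((-τ) • A_c)).mulVec X))
          + A_s.mulVec (Ψ X) := by
  have hΨe : Ψ = fun X => ∫ s in (-τ)..0,
      (mexp ((-s) • A_s)).mulVec (G ((mexp (s • A_c)).mulVec X)) := funext hΨ
  subst hΨe
  intro X
  have hGdiff : Differentiable ℝ G := hG.differentiable one_ne_zero
  have hfdG : Continuous (fderiv ℝ G) := hG.continuous_fderiv one_ne_zero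
  set F' : (Fin m → ℂ) → ℝ → ((Fin m → ℂ) →L[ℝ] (Fin p → ℂ)) := fun Y s =>
    ((mvCLM (mexp ((-s) • A_s))).comp
      ((fderiv ℝ G ((mexp (s • A_c)).mulVec Y)).comp (mvCLM (mexp (s • A_c))))) with hF'def
  -- continuity facts
  have contInner : Continuous (fun q : ℝ × (Fin m → ℂ) => (mexp (q.1 • A_c)).mulVec q.2) := by
    exact ((continuous_mvCLM_mexp A_c).comp continuous_fst).clm_apply continuous_snd
  have contF' : Continuous (fun q : ℝ × (Fin m → ℂ) => F' q.2 q.1) := by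
    apply Continuous.clm_comp
    · exact (continuous_mvCLM_mexp A_s).comp (continuous_neg.comp continuous_fst)
    · exact (hfdG.comp contInner).clm_comp ((continuous_mvCLM_mexp A_c).comp continuous_fst)
  have contF'X : Continuous (fun s : ℝ => F' X s) := by
    apply Continuous.clm_comp
    · exact (continuous_mvCLM_mexp A_s).comp continuous_neg
    · exact (hfdG.comp ((continuous_mvCLM_mexp A_c).clm_apply continuous_const)).clm_comp
        (continuous_mvCLM_mexp A_c)
  have contf : ∀ Y, Continuous (fun s : ℝ =>
      (mexp ((-s) • A_s)).mulVec (G ((mexp (s • A_c)).mulVec Y))) := by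
    intro Y
    exact ((continuous_mvCLM_mexp A_s).comp continuous_neg).clm_apply
      (hG.continuous.comp ((continuous_mvCLM_mexp A_c).clm_apply continuous_const))
  -- bound on the compact set
  obtain ⟨C, hC⟩ := (isCompact_uIcc.prod (isCompact_closedBall X 1)).exists_bound_of_continuousOn
    (f := fun q : ℝ × (Fin m → ℂ) => F' q.2 q.1) contF'.continuousOn
  -- differentiation under the integral sign
  have hF : HasFDerivAt
      (fun Y => ∫ s in (-τ)..0, (mexp ((-s) • A_s)).mulVec (G ((mexp (s • A_c)).mulVec Y)))
      (∫ s in (-τ)..0, F' X s) X := by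
    apply intervalIntegral.hasFDerivAt_integral_of_dominated_of_fderiv_le
      (s := Metric.ball X 1) (bound := fun _ => C) (Metric.ball_mem_nhds X one_pos)
    · filter_upwards with Y
      exact (contf Y).aestronglyMeasurable
    · exact (contf X).intervalIntegrable _ _
    · exact contF'X.aestronglyMeasurable
    · refine Filter.Eventually.of_forall (fun s hs Y hY => ?_)
      exact hC (s, Y) ⟨Set.uIoc_subset_uIcc hs, Metric.ball_subset_closedBall hY⟩
    · exact intervalIntegrable_const
    · refine Filter.Eventually.of_forall (fun s hs Y hY => ?_)
      have h1 : HasFDerivAt (fun Z : Fin m → ℂ => (mexp (s • A_c)).mulVec Z)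
          (mvCLM (mexp (s • A_c))) Y := (mvCLM (mexp (s • A_c))).hasFDerivAt
      have h2 := ((hGdiff ((mexp (s • A_c)).mulVec Y)).hasFDerivAt).comp Y h1
      exact ((mvCLM (mexp ((-s) • A_s))).hasFDerivAt).comp Y h2
  refine ⟨hF.differentiableAt, ?_⟩
  rw [hF.fderiv]
  have hintF' : IntervalIntegrable (fun s => F' X s) volume (-τ) 0 :=
    contF'X.intervalIntegrable _ _
  rw [ContinuousLinearMap.intervalIntegral_apply hintF' (A_c.mulVec X)]
  -- the time-direction computation
  set g : ℝ → (Fin p → ℂ) := fun s =>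
    (mexp ((-s) • A_s)).mulVec (G ((mexp (s • A_c)).mulVec X)) with hgdef
  have hg : ∀ s, HasDerivAt g (F' X s (A_c.mulVec X) - A_s.mulVec (g s)) s := by
    intro s
    have hc := hasDerivAt_mvCLM_mexp_neg A_s s
    have hw : HasDerivAt (fun u : ℝ => G ((mexp (u • A_c)).mulVec X))
        (fderiv ℝ G ((mexp (s • A_c)).mulVec X) ((A_c * mexp (s • A_c)).mulVec X)) s :=
      ((hGdiff ((mexp (s • A_c)).mulVec X)).hasFDerivAt).comp_hasDerivAt s
        (hasDerivAt_mexp_mulVec A_c X s)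
    have h := hc.clm_apply hw
    have e1 : F' X s (A_c.mulVec X) - A_s.mulVec (g s)
        = (-(mvCLM (A_s * mexp ((-s) • A_s)))) (G ((mexp (s • A_c)).mulVec X))
          + mvCLM (mexp ((-s) • A_s))
            (fderiv ℝ G ((mexp (s • A_c)).mulVec X) ((A_c * mexp (s • A_c)).mulVec X)) := by
      simp only [hF'def, hgdef, ContinuousLinearMap.comp_apply,
        ContinuousLinearMap.neg_apply, mvCLM_apply]
      rw [Matrix.mulVec_mulVec, Matrix.mulVec_mulVec, mexp_mul_self_comm]
      exact sub_eq_neg_add _ _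
    rw [e1]
    exact h
  have contg : Continuous g := contf X
  have contAg : Continuous (fun s => A_s.mulVec (g s)) :=
    ((mvCLM A_s).continuous.comp contg : _)
  have contF'v : Continuous (fun s => F' X s (A_c.mulVec X)) :=
    contF'X.clm_apply continuous_const
  have hFTC : (∫ s in (-τ)..0, (F' X s (A_c.mulVec X) - A_s.mulVec (g s))) = g 0 - g (-τ) :=
    intervalIntegral.integral_eq_sub_of_hasDerivAt (fun s _ => hg s)
      ((contF'v.sub contAg).intervalIntegrable _ _)
  have hsplit : (∫ s in (-τ)..0, (F' X s (A_c.mulVec X) - A_s.mulVec (g s)))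
      = (∫ s in (-τ)..0, F' X s (A_c.mulVec X)) - ∫ s in (-τ)..0, A_s.mulVec (g s) :=
    intervalIntegral.integral_sub (contF'v.intervalIntegrable _ _)
      (contAg.intervalIntegrable _ _)
  have hAs : (∫ s in (-τ)..0, A_s.mulVec (g s)) = A_s.mulVec (∫ s in (-τ)..0, g s) :=
    (mvCLM A_s).intervalIntegral_comp_comm (contg.intervalIntegrable _ _)
  have hmain : (∫ s in (-τ)..0, F' X s (A_c.mulVec X))
      = (g 0 - g (-τ)) + A_s.mulVec (∫ s in (-τ)..0, g s) := by
    rw [← hAs]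
    exact eq_add_of_sub_eq (hsplit.symm.trans hFTC)
  have hg0 : g 0 = G X := by
    simp [hgdef, mexp_zero]
  have hgτ : g (-τ) = (mexp (τ • A_s)).mulVec (G ((mexp ((-τ) • A_c)).mulVec X)) := by
    simp [hgdef]
  rw [hmain, hg0, hgτ]
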